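/- Let d : A^K → A be a decomposition operation on a finite set A, and for each 1 ≤ i ≤ K let ~ᵢ be the equivalence relation x ~ᵢ y iff d agrees when x and y are substituted in the i-th slot (other slots fixed arbitrarily). Then the map A → A/~₁ × ⋯ × A/~ₖ sending a to ([a]₁, …, [a]ₖ) is a bijection. -/

import Mathlib

/-- `f` depends essentially on its `i`-th variable. -/
def EssDep {n : ℕ} {A B : Type*} (f : (Fin n → A) → B) (i : Fin n) : Prop :=
  ∃ (b : Fin n → A) (a a' : A),
    f (Function.update b i a) ≠ f (Function.update b i a')

/-- For a decomposition operation `d : A^K → A` on a finite set `A`, the map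
`A → A/~₁ × ⋯ × A/~ₖ`, `a ↦ ([a]₁, …, [a]ₖ)` is a bijection; expressed without
quotients: the family of slot relations jointly separates points (injectivity),
and every `K`-tuple of classes is realized by a single element (surjectivity). -/
theorem stmt3 {K : ℕ} {A : Type*} [Fintype A] (d : (Fin K → A) → A)
    (hdep : ∀ i, EssDep d i)
    (hidem : ∀ x : A, d (fun _ => x) = x)
    (habs : ∀ m : Fin K → Fin K → A,
      d (fun i => d (m i)) = d (fun i => m i i)) :
    (∀ a b : A,
      (∀ (i : Fin K) (z : Fin K → A),
        d (Function.update z i a) = d (Function.update z i b)) → a = b) ∧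
    (∀ c : Fin K → A, ∃ a : A, ∀ (i : Fin K) (z : Fin K → A),
      d (Function.update z i (c i)) = d (Function.update z i a)) := by
  constructor
  · intro a b h
    have key : ∀ n : ℕ, n ≤ K →
        d (fun j : Fin K => if (j : ℕ) < n then b else a) = a := by
      intro n
      induction n with
      | zero => intro _; simpa using hidem a
      | succ n ih =>
        intro hn
        have hnK : n < K := hn
        have e1 : (fun j : Fin K => if (j : ℕ) < n + 1 then b else a)
            = Function.update (fun j : Fin K => if (j : ℕ) < n + 1 then b else a)
              ⟨n, hnK⟩ b := by
          funext j
          rcases eq_or_ne j ⟨n, hnK⟩ with rfl | hj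
          · simp
          · simp [Function.update_of_ne hj]
        have e2 : Function.update (fun j : Fin K => if (j : ℕ) < n + 1 then b else a)
              ⟨n, hnK⟩ a
            = (fun j : Fin K => if (j : ℕ) < n then b else a) := by
          funext j
          rcases eq_or_ne j ⟨n, hnK⟩ with rfl | hj
          · simp
          · have hjn : (j : ℕ) ≠ n := fun hh => hj (Fin.ext hh)
            have hiff : ((j : ℕ) < n + 1) ↔ ((j : ℕ) < n) := by omega
            have hiff' : ((j : ℕ) ≤ n) ↔ ((j : ℕ) < n) := by omega
            simp [Function.update_of_ne hj, hiff, hiff']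
        calc d (fun j : Fin K => if (j : ℕ) < n + 1 then b else a)
            = d (Function.update (fun j : Fin K => if (j : ℕ) < n + 1 then b else a)
                ⟨n, hnK⟩ b) := by rw [← e1]
          _ = d (Function.update (fun j : Fin K => if (j : ℕ) < n + 1 then b else a)
                ⟨n, hnK⟩ a) := (h ⟨n, hnK⟩ _).symm
          _ = d (fun j : Fin K => if (j : ℕ) < n then b else a) := by rw [e2]
          _ = a := ih (le_of_lt hn)
    have hb : d (fun _ : Fin K => b) = a := by
      have := key K le_rfl
      simpa using this
    rw [hidem] at hb
    exact hb.symm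
  · intro c
    refine ⟨d c, ?_⟩
    intro i z
    set m : Fin K → Fin K → A := fun j => if j = i then c else fun _ => z j with hm
    have h1 : (fun j => d (m j)) = Function.update z i (d c) := by
      funext j
      rcases eq_or_ne j i with rfl | hj
      · simp [m]
      · simp [m, hj, Function.update_of_ne hj, hidem]
    have h2 : (fun j => m j j) = Function.update z i (c i) := by
      funext j
      rcases eq_or_ne j i with rfl | hj
      · simp [m]
      · simp [m, hj, Function.update_of_ne hj]
    have h3 := habs m
    rw [h1, h2] at h3
    exact h3.symm
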